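/- Let A* be a projective line arrangement in ℙ²(ℂ), let F ∈ 𝓕(A*) be a graph of Fan type for A*, and let C be the vertex set of a connected component of F. Let 𝒞 ⊆ A* be the set of lines of A* containing at least one vertex in C, and let 𝒟 = A* ∖ 𝒞. Then every line H_C ∈ 𝒞 and every line H_D ∈ 𝒟 intersect in a point of multiplicity two in A*, i.e., no line of A* other than H_C and H_D passes through the intersection point H_C ∩ H_D. -/

import Mathlib

open scoped Classical

/-- The complex projective plane `ℙ²(ℂ)`, the projectivization of `ℂ³`. -/
abbrev P2 : Type := Projectivization ℂ (Fin 3 → ℂ)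

/-- A projective line in `ℙ²(ℂ)`: the image of a 2-dimensional linear subspace of `ℂ³`. -/
def IsProjLine (L : Set P2) : Prop :=
  ∃ W : Submodule ℂ (Fin 3 → ℂ), Module.finrank ℂ W = 2 ∧ L = {p : P2 | p.rep ∈ W}

/-- The multiplicity of a point in an arrangement: the number of lines passing through it. -/
noncomputable def mult (A : Finset (Set P2)) (p : P2) : ℕ :=
  (A.filter (fun L => p ∈ L)).card

/-- `M₃(A)`: the set of points lying on at least three lines of `A`. -/
def M3 (A : Finset (Set P2)) : Set P2 := {p | 3 ≤ mult A p}

/-- `A` has a decone with a general position partition. -/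
def HasDeconeGPP (A : Finset (Set P2)) : Prop :=
  ∃ L ∈ A, ∃ C₁ C₂ : Finset (Set P2),
    C₁.Nonempty ∧ C₂.Nonempty ∧ Disjoint C₁ C₂ ∧ C₁ ∪ C₂ = A.erase L ∧
    ∀ H₁ ∈ C₁, ∀ H₂ ∈ C₂, ∀ p ∈ H₁ ∩ H₂, ∀ K ∈ A, p ∈ K → K = H₁ ∨ K = H₂

/-- `F` is a graph of Fan type for the arrangement `A`: its vertices are the points of
`M₃(A)`, every edge joins two points on a common line of `A`, and for each line `L` the
edges joining points of `M₃(A) ∩ L` are exactly the consecutive pairs of some enumeration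
of `M₃(A) ∩ L`. -/
def IsFanGraph (A : Finset (Set P2)) (F : SimpleGraph ↥(M3 A)) : Prop :=
  (∀ v w : ↥(M3 A), F.Adj v w → ∃ L ∈ A, (v : P2) ∈ L ∧ (w : P2) ∈ L) ∧
  ∀ L ∈ A, (∃ v : ↥(M3 A), (v : P2) ∈ L) →
    ∃ (m : ℕ) (e : Fin m → ↥(M3 A)), Function.Injective e ∧
      (∀ v : ↥(M3 A), (v : P2) ∈ L ↔ ∃ i, e i = v) ∧
      (∀ v w : ↥(M3 A), (v : P2) ∈ L → (w : P2) ∈ L →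
        (F.Adj v w ↔ ∃ i j : Fin m, (j : ℕ) = (i : ℕ) + 1 ∧
          ((e i = v ∧ e j = w) ∨ (e i = w ∧ e j = v))))


lemma fan_reachable (A : Finset (Set P2)) (F : SimpleGraph ↥(M3 A))
    (hF : IsFanGraph A F) (L : Set P2) (hL : L ∈ A)
    (v w : ↥(M3 A)) (hv : (v : P2) ∈ L) (hw : (w : P2) ∈ L) :
    F.Reachable v w := by
  obtain ⟨m, e, hinj, hmem, hadj⟩ := hF.2 L hL ⟨v, hv⟩
  have heL : ∀ i : Fin m, ((e i : ↥(M3 A)) : P2) ∈ L := fun i => (hmem (e i)).mpr ⟨i, rfl⟩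
  have step : ∀ i : Fin m, ∀ h : (i : ℕ) + 1 < m, F.Adj (e i) (e ⟨(i : ℕ) + 1, h⟩) := by
    intro i h
    exact (hadj (e i) (e ⟨(i : ℕ)+1, h⟩) (heL i) (heL _)).mpr
      ⟨i, ⟨(i : ℕ)+1, h⟩, rfl, Or.inl ⟨rfl, rfl⟩⟩
  have key : ∀ n : ℕ, ∀ i : Fin m, ∀ h : (i : ℕ) + n < m,
      F.Reachable (e i) (e ⟨(i : ℕ) + n, h⟩) := by
    intro n
    induction n with
    | zero =>
        intro i h
        have : (⟨(i : ℕ) + 0, h⟩ : Fin m) = i := by ext; simp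
        rw [this]
    | succ n ih =>
        intro i h
        have h' : (i : ℕ) + n < m := by omega
        have r1 := ih i h'
        have h2 : ((⟨(i : ℕ) + n, h'⟩ : Fin m) : ℕ) + 1 < m := by simpa [Nat.add_assoc] using h
        have r2 := (step ⟨(i : ℕ) + n, h'⟩ h2).reachable
        have heq : (⟨((⟨(i : ℕ) + n, h'⟩ : Fin m) : ℕ) + 1, h2⟩ : Fin m)
            = ⟨(i : ℕ) + (n + 1), h⟩ := by ext; simp [Nat.add_assoc]
        rw [heq] at r2
        exact r1.trans r2
  obtain ⟨iv, hiv⟩ := (hmem v).mp hv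
  obtain ⟨iw, hiw⟩ := (hmem w).mp hw
  rcases le_or_gt (iv : ℕ) (iw : ℕ) with hle | hlt
  · have h : (iv : ℕ) + ((iw : ℕ) - (iv : ℕ)) < m := by omega
    have := key ((iw : ℕ) - (iv : ℕ)) iv h
    have heq : (⟨(iv : ℕ) + ((iw : ℕ) - (iv : ℕ)), h⟩ : Fin m) = iw := by ext; simp; omega
    rw [heq, hiv, hiw] at this
    exact this
  · have h : (iw : ℕ) + ((iv : ℕ) - (iw : ℕ)) < m := by omega
    have := key ((iv : ℕ) - (iw : ℕ)) iw h
    have heq : (⟨(iw : ℕ) + ((iv : ℕ) - (iw : ℕ)), h⟩ : Fin m) = iv := by ext; simp; omega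
    rw [heq, hiv, hiw] at this
    exact this.symm

theorem component_lines_meet_rest_transversally
    (A : Finset (Set P2)) (hA : ∀ L ∈ A, IsProjLine L)
    (F : SimpleGraph ↥(M3 A)) (hF : IsFanGraph A F)
    (v₀ : ↥(M3 A)) (C : Set ↥(M3 A)) (hC : C = {w | F.Reachable v₀ w})
    (H_C : Set P2) (hHC : H_C ∈ A) (hHCv : ∃ v ∈ C, (v : P2) ∈ H_C)
    (H_D : Set P2) (hHD : H_D ∈ A) (hHDv : ¬ ∃ v ∈ C, (v : P2) ∈ H_D) :
    ∀ p ∈ H_C ∩ H_D, ∀ K ∈ A, p ∈ K → K = H_C ∨ K = H_D := by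
  intro p hp K hK hpK
  by_contra hcon
  push_neg at hcon
  obtain ⟨hKC, hKD⟩ := hcon
  obtain ⟨hpC, hpD⟩ := hp
  obtain ⟨v, hvC, hvHC⟩ := hHCv
  have hne : H_C ≠ H_D := by
    rintro rfl; exact hHDv ⟨v, hvC, hvHC⟩
  have hpM3 : p ∈ M3 A := by
    have hsub : ({H_C, H_D, K} : Finset (Set P2)) ⊆ A.filter (fun L => p ∈ L) := by
      intro L hL
      simp only [Finset.mem_insert, Finset.mem_singleton] at hL
      rcases hL with rfl | rfl | rfl <;> simp [Finset.mem_filter, hHC, hHD, hK, hpC, hpD, hpK]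
    have hcard : ({H_C, H_D, K} : Finset (Set P2)).card = 3 := by
      rw [Finset.card_insert_of_notMem (by simp [hne, Ne.symm hKC]),
        Finset.card_insert_of_notMem (by simp [Ne.symm hKD]), Finset.card_singleton]
    have := Finset.card_le_card hsub
    rw [hcard] at this
    exact this
  set q : ↥(M3 A) := ⟨p, hpM3⟩
  have hreach : F.Reachable v q := fan_reachable A F hF H_C hHC v q hvHC hpC
  have hqC : q ∈ C := by
    rw [hC] at hvC ⊢
    exact hvC.trans hreach
  exact hHDv ⟨q, hqC, hpD⟩
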